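/- In O_q(SL_2(ℂ)) with q ∈ ℂ^× not a root of unity, the commutator of the quantum trace with a basis monomial satisfies: [a + d, a^i b^k c^l] = (1 − q^{−(k+l)}) a^{i+1} b^k c^l + (1 − q^{k+l}) a^{i−1} b^k c^l + (q^{−2(i−1)−1} − q^{k+l+1}) a^{i−1} b^{k+1} c^{l+1}, for all integers i ≥ 1 and k, l ≥ 0. -/

import Mathlib

/-- Defining relations of `O_q(SL_2(ℂ))` on generators `a, b, c, d` (indexed by `Fin 4`):
`ab = q·ba`, `ac = q·ca`, `bd = q·db`, `cd = q·dc`, `bc = cb`,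
`ad − da = (q − q⁻¹)·bc`, `ad − q·bc = 1`. -/
inductive SL2Rel (q : ℂ) : FreeAlgebra ℂ (Fin 4) → FreeAlgebra ℂ (Fin 4) → Prop
  | ab : SL2Rel q (FreeAlgebra.ι ℂ 0 * FreeAlgebra.ι ℂ 1)
      (q • (FreeAlgebra.ι ℂ 1 * FreeAlgebra.ι ℂ 0))
  | ac : SL2Rel q (FreeAlgebra.ι ℂ 0 * FreeAlgebra.ι ℂ 2)
      (q • (FreeAlgebra.ι ℂ 2 * FreeAlgebra.ι ℂ 0))
  | bd : SL2Rel q (FreeAlgebra.ι ℂ 1 * FreeAlgebra.ι ℂ 3)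
      (q • (FreeAlgebra.ι ℂ 3 * FreeAlgebra.ι ℂ 1))
  | cd : SL2Rel q (FreeAlgebra.ι ℂ 2 * FreeAlgebra.ι ℂ 3)
      (q • (FreeAlgebra.ι ℂ 3 * FreeAlgebra.ι ℂ 2))
  | bc : SL2Rel q (FreeAlgebra.ι ℂ 1 * FreeAlgebra.ι ℂ 2)
      (FreeAlgebra.ι ℂ 2 * FreeAlgebra.ι ℂ 1)
  | ad : SL2Rel q (FreeAlgebra.ι ℂ 0 * FreeAlgebra.ι ℂ 3)
      (FreeAlgebra.ι ℂ 3 * FreeAlgebra.ι ℂ 0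
        + (q - q⁻¹) • (FreeAlgebra.ι ℂ 1 * FreeAlgebra.ι ℂ 2))
  | det : SL2Rel q (FreeAlgebra.ι ℂ 0 * FreeAlgebra.ι ℂ 3
        - q • (FreeAlgebra.ι ℂ 1 * FreeAlgebra.ι ℂ 2)) 1

/-- The quantized coordinate ring `O_q(SL_2(ℂ))`. -/
abbrev OqSL2 (q : ℂ) := RingQuot (SL2Rel q)

noncomputable def SL2a (q : ℂ) : OqSL2 q := RingQuot.mkAlgHom ℂ (SL2Rel q) (FreeAlgebra.ι ℂ 0)
noncomputable def SL2b (q : ℂ) : OqSL2 q := RingQuot.mkAlgHom ℂ (SL2Rel q) (FreeAlgebra.ι ℂ 1)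
noncomputable def SL2c (q : ℂ) : OqSL2 q := RingQuot.mkAlgHom ℂ (SL2Rel q) (FreeAlgebra.ι ℂ 2)
noncomputable def SL2d (q : ℂ) : OqSL2 q := RingQuot.mkAlgHom ℂ (SL2Rel q) (FreeAlgebra.ι ℂ 3)




section helpers

variable {R : Type*} [Ring R] [Algebra ℂ R]

lemma swap_pow {s : ℂ} {x y : R} (h : y * x = s • (x * y)) :
    ∀ n : ℕ, y ^ n * x = s ^ n • (x * y ^ n)
  | 0 => by simp
  | n + 1 => by
    rw [pow_succ, mul_assoc, h, mul_smul_comm, ← mul_assoc, swap_pow h n, smul_mul_assoc,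
      smul_smul, mul_assoc, ← pow_succ, ← pow_succ']

lemma mul_move {u v : R} {s : ℂ} (h : u * v = s • (v * u)) (x : R) :
    u * (v * x) = s • (v * (u * x)) := by
  rw [← mul_assoc, h, smul_mul_assoc, mul_assoc]

lemma main_calc (q : ℂ) (hq0 : q ≠ 0) (a b c d : R)
    (hba : b * a = q⁻¹ • (a * b))
    (hca : c * a = q⁻¹ • (a * c))
    (hbd : b * d = q • (d * b))
    (hcd : c * d = q • (d * c))
    (hcb : c * b = b * c)
    (hda : d * a = a * d - (q - q⁻¹) • (b * c))
    (had1 : a * d = 1 + q • (b * c))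
    (j k l : ℕ) :
    (a + d) * (a ^ (j + 1) * (b ^ k * c ^ l)) - (a ^ (j + 1) * (b ^ k * c ^ l)) * (a + d) =
      (1 - q⁻¹ ^ (k + l)) • (a ^ (j + 1 + 1) * (b ^ k * c ^ l))
        + (1 - q ^ (k + l)) • (a ^ j * (b ^ k * c ^ l))
        + (q⁻¹ ^ (2 * j + 1) - q ^ (k + l + 1)) • (a ^ j * (b ^ (k + 1) * c ^ (l + 1))) := by
  have hbka := swap_pow hba
  have hcla := swap_pow hca
  have hbkd := swap_pow hbd
  have hcld := swap_pow hcd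
  have hcbk : ∀ n : ℕ, c * b ^ n = b ^ n * c := by
    intro n
    have h := swap_pow (show b * c = (1 : ℂ) • (c * b) by rw [one_smul, hcb]) n
    simp only [one_pow, one_smul] at h
    exact h.symm
  have hbca : (b * c) * a = (q⁻¹ * q⁻¹) • (a * (b * c)) := by
    calc (b * c) * a = b * (c * a) := mul_assoc _ _ _
      _ = q⁻¹ • (b * (a * c)) := by rw [hca, mul_smul_comm]
      _ = q⁻¹ • ((b * a) * c) := by rw [mul_assoc]
      _ = q⁻¹ • ((q⁻¹ • (a * b)) * c) := by rw [hba]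
      _ = (q⁻¹ * q⁻¹) • (a * (b * c)) := by rw [smul_mul_assoc, smul_smul, mul_assoc]
  have hda_pow : ∀ n : ℕ, d * a ^ (n + 1)
      = a ^ (n + 1) * d - (q - q⁻¹ ^ (2 * n + 1)) • (a ^ n * (b * c)) := by
    intro n
    induction n with
    | zero => simpa using hda
    | succ n ih =>
      have h1 : d * a ^ (n + 1 + 1) = (d * a ^ (n + 1)) * a := by rw [pow_succ, ← mul_assoc]
      rw [h1, ih, sub_mul, smul_mul_assoc, mul_assoc, mul_assoc, hda, hbca]
      rw [mul_sub, mul_smul_comm, mul_smul_comm, smul_smul]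
      have h2 : a ^ (n + 1) * (a * d) = a ^ (n + 1 + 1) * d := by rw [← mul_assoc, ← pow_succ]
      have h3 : a ^ n * (a * (b * c)) = a ^ (n + 1) * (b * c) := by rw [← mul_assoc, ← pow_succ]
      rw [h2, h3, sub_sub, ← add_smul]
      have hsc : (q - q⁻¹) + (q - q⁻¹ ^ (2 * n + 1)) * (q⁻¹ * q⁻¹) = q - q⁻¹ ^ (2 * (n + 1) + 1) := by
        linear_combination q⁻¹ * mul_inv_cancel₀ hq0
      rw [hsc]
  have hbc_prod : (b * c) * (b ^ k * c ^ l) = b ^ (k + 1) * c ^ (l + 1) := by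
    calc (b * c) * (b ^ k * c ^ l) = b * (c * (b ^ k * c ^ l)) := mul_assoc _ _ _
      _ = b * (b ^ k * (c * c ^ l)) := by
          rw [mul_move (show c * b ^ k = (1 : ℂ) • (b ^ k * c) by rw [one_smul, hcbk]), one_smul]
      _ = (b * b ^ k) * (c * c ^ l) := (mul_assoc _ _ _).symm
      _ = b ^ (k + 1) * c ^ (l + 1) := by rw [← pow_succ', ← pow_succ']
  have hADY : (a ^ (j + 1) * d) * (b ^ k * c ^ l)
      = a ^ j * (b ^ k * c ^ l) + q • (a ^ j * (b ^ (k + 1) * c ^ (l + 1))) := by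
    rw [pow_succ, mul_assoc (a ^ j) a d, had1, mul_add, mul_one, mul_smul_comm, add_mul,
      smul_mul_assoc, mul_assoc, hbc_prod]
  have hAM : a * (a ^ (j + 1) * (b ^ k * c ^ l)) = a ^ (j + 1 + 1) * (b ^ k * c ^ l) := by
    rw [← mul_assoc, ← pow_succ']
  have hMa : (a ^ (j + 1) * (b ^ k * c ^ l)) * a
      = (q⁻¹ ^ l * q⁻¹ ^ k) • (a ^ (j + 1 + 1) * (b ^ k * c ^ l)) := by
    calc (a ^ (j + 1) * (b ^ k * c ^ l)) * a = a ^ (j + 1) * (b ^ k * (c ^ l * a)) := by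
          rw [mul_assoc, mul_assoc]
      _ = q⁻¹ ^ l • (a ^ (j + 1) * (b ^ k * (a * c ^ l))) := by
          rw [hcla, mul_smul_comm, mul_smul_comm]
      _ = q⁻¹ ^ l • (a ^ (j + 1) * (q⁻¹ ^ k • (a * (b ^ k * c ^ l)))) := by
          rw [mul_move (hbka k)]
      _ = (q⁻¹ ^ l * q⁻¹ ^ k) • (a ^ (j + 1 + 1) * (b ^ k * c ^ l)) := by
          rw [mul_smul_comm, smul_smul, ← mul_assoc, ← pow_succ]
  have hMd : (a ^ (j + 1) * (b ^ k * c ^ l)) * d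
      = (q ^ l * q ^ k) • (a ^ j * (b ^ k * c ^ l) + q • (a ^ j * (b ^ (k + 1) * c ^ (l + 1)))) := by
    calc (a ^ (j + 1) * (b ^ k * c ^ l)) * d = a ^ (j + 1) * (b ^ k * (c ^ l * d)) := by
          rw [mul_assoc, mul_assoc]
      _ = q ^ l • (a ^ (j + 1) * (b ^ k * (d * c ^ l))) := by
          rw [hcld, mul_smul_comm, mul_smul_comm]
      _ = q ^ l • (a ^ (j + 1) * (q ^ k • (d * (b ^ k * c ^ l)))) := by rw [mul_move (hbkd k)]
      _ = (q ^ l * q ^ k) • ((a ^ (j + 1) * d) * (b ^ k * c ^ l)) := by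
          rw [mul_smul_comm, smul_smul, ← mul_assoc]
      _ = (q ^ l * q ^ k) • (a ^ j * (b ^ k * c ^ l) + q • (a ^ j * (b ^ (k + 1) * c ^ (l + 1)))) := by
          rw [hADY]
  have hDM : d * (a ^ (j + 1) * (b ^ k * c ^ l))
      = a ^ j * (b ^ k * c ^ l) + q • (a ^ j * (b ^ (k + 1) * c ^ (l + 1)))
        - (q - q⁻¹ ^ (2 * j + 1)) • (a ^ j * (b ^ (k + 1) * c ^ (l + 1))) := by
    rw [← mul_assoc, hda_pow j, sub_mul, smul_mul_assoc, hADY, mul_assoc (a ^ j) (b * c),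
      hbc_prod]
  rw [add_mul, mul_add, hAM, hMa, hMd, hDM]
  match_scalars <;> ring

end helpers

section rels
variable (q : ℂ)

lemma relAB : SL2a q * SL2b q = q • (SL2b q * SL2a q) := by
  have h := RingQuot.mkAlgHom_rel ℂ (SL2Rel.ab (q := q))
  simpa [SL2a, SL2b, map_mul] using h

lemma relAC : SL2a q * SL2c q = q • (SL2c q * SL2a q) := by
  have h := RingQuot.mkAlgHom_rel ℂ (SL2Rel.ac (q := q))
  simpa [SL2a, SL2c, map_mul] using h

lemma relBD : SL2b q * SL2d q = q • (SL2d q * SL2b q) := by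
  have h := RingQuot.mkAlgHom_rel ℂ (SL2Rel.bd (q := q))
  simpa [SL2b, SL2d, map_mul] using h

lemma relCD : SL2c q * SL2d q = q • (SL2d q * SL2c q) := by
  have h := RingQuot.mkAlgHom_rel ℂ (SL2Rel.cd (q := q))
  simpa [SL2c, SL2d, map_mul] using h

lemma relCB : SL2c q * SL2b q = SL2b q * SL2c q := by
  have h := RingQuot.mkAlgHom_rel ℂ (SL2Rel.bc (q := q))
  simpa [SL2b, SL2c, map_mul] using h.symm

lemma relAD : SL2a q * SL2d q = SL2d q * SL2a q + (q - q⁻¹) • (SL2b q * SL2c q) := by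
  have h := RingQuot.mkAlgHom_rel ℂ (SL2Rel.ad (q := q))
  simpa [SL2a, SL2b, SL2c, SL2d, map_mul] using h

lemma relDET : SL2a q * SL2d q = 1 + q • (SL2b q * SL2c q) := by
  have h := RingQuot.mkAlgHom_rel ℂ (SL2Rel.det (q := q))
  simp only [map_sub, map_smul, map_mul, map_one] at h
  have := sub_eq_iff_eq_add.mp h
  simpa [SL2a, SL2b, SL2c, SL2d] using this

end rels

theorem key_calc (q : ℂ) (hq0 : q ≠ 0) (i k l : ℕ) (hi : 1 ≤ i) :
    (SL2a q + SL2d q) * (SL2a q ^ i * SL2b q ^ k * SL2c q ^ l)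
      - (SL2a q ^ i * SL2b q ^ k * SL2c q ^ l) * (SL2a q + SL2d q) =
      (1 - q ^ (-((k : ℤ) + l))) • (SL2a q ^ (i + 1) * SL2b q ^ k * SL2c q ^ l)
        + (1 - q ^ ((k : ℤ) + l)) • (SL2a q ^ (i - 1) * SL2b q ^ k * SL2c q ^ l)
        + (q ^ (-2 * ((i : ℤ) - 1) - 1) - q ^ ((k : ℤ) + l + 1)) •
            (SL2a q ^ (i - 1) * SL2b q ^ (k + 1) * SL2c q ^ (l + 1)) := by
  obtain ⟨j, rfl⟩ : ∃ j, i = j + 1 := ⟨i - 1, (Nat.succ_pred_eq_of_pos hi).symm⟩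
  set a := SL2a q
  set b := SL2b q
  set c := SL2c q
  set d := SL2d q
  have hba : b * a = q⁻¹ • (a * b) := by
    rw [relAB, smul_smul, inv_mul_cancel₀ hq0, one_smul]
  have hca : c * a = q⁻¹ • (a * c) := by
    rw [relAC, smul_smul, inv_mul_cancel₀ hq0, one_smul]
  have hda : d * a = a * d - (q - q⁻¹) • (b * c) := by
    rw [relAD]; abel
  have e1 : q ^ (-((k : ℤ) + l)) = q⁻¹ ^ (k + l) := by
    rw [← Nat.cast_add, zpow_neg, zpow_natCast, inv_pow]
  have e2 : q ^ ((k : ℤ) + l) = q ^ (k + l) := by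
    rw [← Nat.cast_add, zpow_natCast]
  have e3 : q ^ (-2 * (((j + 1 : ℕ) : ℤ) - 1) - 1) = q⁻¹ ^ (2 * j + 1) := by
    rw [show (-2 * (((j + 1 : ℕ) : ℤ) - 1) - 1) = -((2 * j + 1 : ℕ) : ℤ) by push_cast; ring,
      zpow_neg, zpow_natCast, inv_pow]
  have e4 : q ^ ((k : ℤ) + l + 1) = q ^ (k + l + 1) := by
    rw [show ((k : ℤ) + l + 1) = ((k + l + 1 : ℕ) : ℤ) by push_cast; ring, zpow_natCast]
  rw [e1, e2, e3, e4, Nat.add_sub_cancel]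
  have := main_calc q hq0 a b c d hba hca (relBD q) (relCD q) (relCB q) hda (relDET q) j k l
  simpa only [mul_assoc] using this

/-- In `O_q(SL_2(ℂ))` with `q` not a root of unity, for all `i ≥ 1` and `k, l ≥ 0`:
`[a + d, aⁱbᵏcˡ] = (1 − q^{−(k+l)}) a^{i+1}bᵏcˡ + (1 − q^{k+l}) a^{i−1}bᵏcˡ
  + (q^{−2(i−1)−1} − q^{k+l+1}) a^{i−1}b^{k+1}c^{l+1}`. -/
theorem commutator_trace_with_basis_monomial (q : ℂ) (hq0 : q ≠ 0)
    (hq : ∀ m : ℕ, m ≠ 0 → q ^ m ≠ 1) (i k l : ℕ) (hi : 1 ≤ i) :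
    let a := SL2a q; let b := SL2b q; let c := SL2c q; let d := SL2d q
    (a + d) * (a ^ i * b ^ k * c ^ l) - (a ^ i * b ^ k * c ^ l) * (a + d) =
      (1 - q ^ (-((k : ℤ) + l))) • (a ^ (i + 1) * b ^ k * c ^ l)
        + (1 - q ^ ((k : ℤ) + l)) • (a ^ (i - 1) * b ^ k * c ^ l)
        + (q ^ (-2 * ((i : ℤ) - 1) - 1) - q ^ ((k : ℤ) + l + 1)) •
            (a ^ (i - 1) * b ^ (k + 1) * c ^ (l + 1)) := by
  intro a b c d
  exact key_calc q hq0 i k l hi
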